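/- Let A be a skew PBW extension of R in variables x_1, …, x_n, and for k ≥ 0 let A_k be the left R-submodule of A spanned by the monomials x^α with |α| = k. Then A is a finitely semi-graded ring with semi-graduation (A_k)_{k≥0}: A = ⊕_{k≥0} A_k as additive groups, A_p · A_q ⊆ A_0 ⊕ ⋯ ⊕ A_{p+q} for all p, q ≥ 0, 1 ∈ A_0 = R, each A_k is a free left A_0-module of finite rank, and A is generated as a ring by A_0 together with the finitely many elements x_1, …, x_n ∈ A_1. -/

import Mathlib

/-- The ordered monomial `x₁^{α₁} ⋯ xₙ^{αₙ}`. -/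
def skewPBWMonomial {A : Type*} [Ring A] {n : ℕ} (x : Fin n → A) (α : Fin n → ℕ) : A :=
  (List.ofFn fun i => x i ^ α i).prod

namespace SkewAux

variable {A : Type*} [Ring A]

lemma mono_zero {n : ℕ} (x : Fin n → A) : skewPBWMonomial x (fun _ => 0) = 1 := by
  simp [skewPBWMonomial]

lemma mono_succ {n : ℕ} (x : Fin (n+1) → A) (β : Fin (n+1) → ℕ) :
    skewPBWMonomial x β = x 0 ^ β 0 * skewPBWMonomial (x ∘ Fin.succ) (β ∘ Fin.succ) := by
  rw [skewPBWMonomial, List.ofFn_succ, List.prod_cons]; rfl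

lemma xi_mul_mono {n : ℕ} (x : Fin n → A) (β : Fin n → ℕ) (i : Fin n)
    (hk : ∀ k, k < i → β k = 0) :
    x i * skewPBWMonomial x β = skewPBWMonomial x (Function.update β i (β i + 1)) := by
  induction n with
  | zero => exact i.elim0
  | succ n ih =>
    rcases Fin.eq_zero_or_eq_succ i with rfl | ⟨j, rfl⟩
    · rw [mono_succ, mono_succ, ← mul_assoc, ← pow_succ']
      have h1 : Function.update β 0 (β 0 + 1) 0 = β 0 + 1 := Function.update_self _ _ _
      have h2 : (Function.update β 0 (β 0 + 1)) ∘ Fin.succ = β ∘ Fin.succ :=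
        funext fun k => Function.update_of_ne (Fin.succ_ne_zero k) _ _
      rw [h1, h2]
    · have h0 : β 0 = 0 := hk 0 (Fin.succ_pos j)
      rw [mono_succ x β, h0, pow_zero, one_mul,
          mono_succ x (Function.update β j.succ (β j.succ + 1))]
      have h0' : Function.update β j.succ (β j.succ + 1) 0 = 0 := by
        rw [Function.update_of_ne (Fin.succ_ne_zero j).symm]; exact h0
      have hcomp : (Function.update β j.succ (β j.succ + 1)) ∘ Fin.succ
          = Function.update (β ∘ Fin.succ) j ((β ∘ Fin.succ) j + 1) := by
        funext k
        simp only [Function.comp_apply, Function.update_apply, Fin.succ_inj]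
      rw [h0', pow_zero, one_mul, hcomp]
      exact ih (x ∘ Fin.succ) (β ∘ Fin.succ) j
        (fun k hkj => hk k.succ (by simpa [Fin.succ_lt_succ_iff] using hkj))

lemma sum_update_succ {n : ℕ} (β : Fin n → ℕ) (j : Fin n) :
    (∑ i, Function.update β j (β j + 1) i) = (∑ i, β i) + 1 := by
  rw [Finset.sum_update_of_mem (Finset.mem_univ j),
      Finset.sum_eq_sum_sdiff_singleton_add (Finset.mem_univ j) β]
  omega

lemma sum_update_pred {n : ℕ} (β : Fin n → ℕ) (j : Fin n) (hj : β j ≠ 0) :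
    (∑ i, Function.update β j (β j - 1) i) + 1 = ∑ i, β i := by
  rw [Finset.sum_update_of_mem (Finset.mem_univ j),
      Finset.sum_eq_sum_sdiff_singleton_add (Finset.mem_univ j) β]
  omega

end SkewAux

/-- `A` is a skew PBW extension of the subring `S` with variables `x₁, …, xₙ`. -/
structure IsSkewPBWExt {A : Type*} [Ring A] (S : Subring A) {n : ℕ} (x : Fin n → A) : Prop where
  linearIndependent : LinearIndependent S (skewPBWMonomial x)
  span_top : Submodule.span S (Set.range (skewPBWMonomial x)) = ⊤
  comm_coeff : ∀ (i : Fin n) (r : S), r ≠ 0 →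
    ∃ c : S, c ≠ 0 ∧ x i * (r : A) - (c : A) * x i ∈ (S : Set A)
  comm_var : ∀ i j : Fin n, ∃ c : S, c ≠ 0 ∧ ∃ (r₀ : S) (r : Fin n → S),
    x j * x i - (c : A) * (x i * x j) = (r₀ : A) + ∑ k, (r k : A) * x k

/-- `A_k`, the left `S`-submodule of `A` spanned by the standard monomials of total
degree `k`. -/
def skewPBWDeg {A : Type*} [Ring A] (S : Subring A) {n : ℕ} (x : Fin n → A) (k : ℕ) :
    Submodule S A :=
  Submodule.span S {a | ∃ α : Fin n → ℕ, (∑ i, α i) = k ∧ a = skewPBWMonomial x α}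

namespace SkewAux

variable {A : Type*} [Ring A] (S : Subring A) {n : ℕ} (x : Fin n → A)

/-- The filtration: span of monomials of degree at most `N`. -/
def skewF (N : ℕ) : Submodule S A :=
  Submodule.span S {a | ∃ α : Fin n → ℕ, (∑ i, α i) ≤ N ∧ a = skewPBWMonomial x α}

variable {S x}

lemma skewF_mono {N M : ℕ} (hNM : N ≤ M) : skewF S x N ≤ skewF S x M :=
  Submodule.span_mono fun a ⟨α, hα, ha⟩ => ⟨α, hα.trans hNM, ha⟩

lemma mono_mem_skewF {N : ℕ} {α : Fin n → ℕ} (hα : (∑ i, α i) ≤ N) :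
    skewPBWMonomial x α ∈ skewF S x N :=
  Submodule.subset_span ⟨α, hα, rfl⟩

lemma smul_coe (s : S) (a : A) : s • a = (s : A) * a := rfl

/-- Lifting: if multiplication by `x j` sends monomials of degree `≤ N` into `F (N+1)`,
then it sends all of `F N` into `F (N+1)`. -/
lemma lift_mul (h : IsSkewPBWExt S x) {N : ℕ} {j : Fin n}
    (H : ∀ β : Fin n → ℕ, (∑ k, β k) ≤ N → x j * skewPBWMonomial x β ∈ skewF S x (N+1)) :
    ∀ a ∈ skewF S x N, x j * a ∈ skewF S x (N+1) := by
  intro a ha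
  induction ha using Submodule.span_induction with
  | mem a ha => obtain ⟨α, hα, rfl⟩ := ha; exact H α hα
  | zero => simpa using (skewF S x (N+1)).zero_mem
  | add a b _ _ hxa hxb => rw [mul_add]; exact add_mem hxa hxb
  | smul s a ha hxa =>
      by_cases hs : s = 0
      · simp [hs]
      · obtain ⟨c, -, hc⟩ := h.comm_coeff j s hs
        set r' : S := ⟨x j * (s : A) - (c : A) * x j, hc⟩ with hr'
        have hxjs : x j * (s : A) = (r' : A) + (c : A) * x j := by
          rw [hr']; exact (sub_add_cancel _ _).symm
        have heq : x j * (s • a) = r' • a + c • (x j * a) := by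
          rw [smul_coe, smul_coe, smul_coe, ← mul_assoc, hxjs, add_mul, mul_assoc]
        rw [heq]
        exact add_mem (skewF_mono (Nat.le_succ N) (Submodule.smul_mem _ r' ha))
          (Submodule.smul_mem _ c hxa)


/-- Key lemma: `x i` times a monomial of degree `≤ d` lies in `F (d+1)`. -/
lemma key (h : IsSkewPBWExt S x) :
    ∀ d m : ℕ, ∀ i : Fin n, i.1 ≤ m → ∀ β : Fin n → ℕ, (∑ k, β k) ≤ d →
      x i * skewPBWMonomial x β ∈ skewF S x (d+1) := by
  intro d
  induction d using Nat.strong_induction_on with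
  | _ d ihd =>
  intro m
  induction m using Nat.strong_induction_on with
  | _ m ihm =>
  intro i him β hβ
  by_cases hlow : ∀ k, k < i → β k = 0
  · rw [xi_mul_mono x β i hlow]
    exact mono_mem_skewF (by rw [sum_update_succ]; omega)
  · push_neg at hlow
    obtain ⟨k₀, hk₀i, hk₀⟩ := hlow
    -- minimal index with nonzero exponent
    set T : Finset (Fin n) := Finset.univ.filter (fun k => β k ≠ 0) with hT
    have hTne : T.Nonempty := ⟨k₀, by simp [hT, hk₀]⟩
    set j : Fin n := T.min' hTne with hjdef
    have hjmem : β j ≠ 0 := by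
      have := T.min'_mem hTne
      simpa [hT] using this
    have hmin : ∀ k, k < j → β k = 0 := by
      intro k hkj
      by_contra hkne
      have hle : j ≤ k := T.min'_le k (by simp [hT, hkne])
      exact absurd hle (not_le.mpr hkj)
    have hji : j < i := lt_of_le_of_lt (T.min'_le k₀ (by simp [hT, hk₀])) hk₀i
    set β' : Fin n → ℕ := Function.update β j (β j - 1) with hβ'def
    have hβ'low : ∀ k, k < j → β' k = 0 := fun k hkj =>
      (Function.update_of_ne (ne_of_lt hkj) _ _).trans (hmin k hkj)
    have hsum' : (∑ k, β' k) + 1 = ∑ k, β k := sum_update_pred β j hjmem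
    have hrec : x j * skewPBWMonomial x β' = skewPBWMonomial x β := by
      rw [xi_mul_mono x β' j hβ'low]
      congr 1
      funext k
      by_cases hkj : k = j
      · subst hkj
        simp only [hβ'def, Function.update_self]
        omega
      · simp only [hβ'def, Function.update_of_ne hkj]
    have hd1 : 1 ≤ d := by
      have : 1 ≤ ∑ k, β k := by omega
      omega
    have hsum'd : (∑ k, β' k) ≤ d - 1 := by omega
    obtain ⟨c, -, r₀, r, hcv⟩ := h.comm_var j i
    have hxixj : x i * x j = (c : A) * (x j * x i) + ((r₀ : A) + ∑ k, (r k : A) * x k) :=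
      sub_eq_iff_eq_add'.mp hcv
    have heq : x i * skewPBWMonomial x β
        = (c : A) * (x j * (x i * skewPBWMonomial x β'))
          + ((r₀ : A) * skewPBWMonomial x β'
            + ∑ k, (r k : A) * (x k * skewPBWMonomial x β')) := by
      rw [← hrec, ← mul_assoc, hxixj, add_mul, add_mul, Finset.sum_mul]
      simp only [mul_assoc]
    rw [heq]
    have ht1 : x i * skewPBWMonomial x β' ∈ skewF S x d := by
      have := ihd (d-1) (by omega) i.1 i le_rfl β' hsum'd
      rwa [Nat.sub_add_cancel hd1] at this
    refine add_mem ?_ (add_mem ?_ ?_)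
    · refine Submodule.smul_mem _ c ?_
      exact lift_mul h (fun β'' hb'' => ihm j.1 (lt_of_lt_of_le hji him) j le_rfl β'' hb'')
        _ ht1
    · exact skewF_mono (by omega) (Submodule.smul_mem _ r₀ (mono_mem_skewF hsum'd))
    · refine Submodule.sum_mem _ (fun k _ => ?_)
      refine Submodule.smul_mem _ (r k) ?_
      refine skewF_mono (Nat.le_succ d) ?_
      have := ihd (d-1) (by omega) k.1 k le_rfl β' hsum'd
      rwa [Nat.sub_add_cancel hd1] at this


lemma mono_mul_mem (h : IsSkewPBWExt S x) :
    ∀ p : ℕ, ∀ β : Fin n → ℕ, (∑ k, β k) ≤ p → ∀ q : ℕ, ∀ a ∈ skewF S x q,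
      skewPBWMonomial x β * a ∈ skewF S x (p + q) := by
  intro p
  induction p using Nat.strong_induction_on with
  | _ p ihp =>
  intro β hβ q a ha
  by_cases h0 : ∀ k, β k = 0
  · have hb : β = fun _ => 0 := funext h0
    rw [hb, mono_zero, one_mul]
    exact skewF_mono (Nat.le_add_left q p) ha
  · push_neg at h0
    obtain ⟨k₀, hk₀⟩ := h0
    set T : Finset (Fin n) := Finset.univ.filter (fun k => β k ≠ 0) with hT
    have hTne : T.Nonempty := ⟨k₀, by simp [hT, hk₀]⟩
    set j : Fin n := T.min' hTne with hjdef
    have hjmem : β j ≠ 0 := by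
      have := T.min'_mem hTne
      simpa [hT] using this
    have hmin : ∀ k, k < j → β k = 0 := by
      intro k hkj
      by_contra hkne
      have hle : j ≤ k := T.min'_le k (by simp [hT, hkne])
      exact absurd hle (not_le.mpr hkj)
    set β' : Fin n → ℕ := Function.update β j (β j - 1) with hβ'def
    have hβ'low : ∀ k, k < j → β' k = 0 := fun k hkj =>
      (Function.update_of_ne (ne_of_lt hkj) _ _).trans (hmin k hkj)
    have hsum' : (∑ k, β' k) + 1 = ∑ k, β k := sum_update_pred β j hjmem
    have hrec : x j * skewPBWMonomial x β' = skewPBWMonomial x β := by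
      rw [xi_mul_mono x β' j hβ'low]
      congr 1
      funext k
      by_cases hkj : k = j
      · subst hkj
        simp only [hβ'def, Function.update_self]
        omega
      · simp only [hβ'def, Function.update_of_ne hkj]
    have hp1 : 1 ≤ p := by
      have : 1 ≤ ∑ k, β k := by omega
      omega
    have step : skewPBWMonomial x β' * a ∈ skewF S x ((p-1) + q) :=
      ihp (p-1) (by omega) β' (by omega) q a ha
    have hmul : skewPBWMonomial x β * a = x j * (skewPBWMonomial x β' * a) := by
      rw [← hrec, mul_assoc]
    rw [hmul]
    have hmem := lift_mul h (fun β'' hb'' => key h ((p-1)+q) j.1 j le_rfl β'' hb'') _ step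
    have hpq : (p-1) + q + 1 = p + q := by omega
    rwa [hpq] at hmem

lemma deg_le_skewF (k : ℕ) : skewPBWDeg S x k ≤ skewF S x k :=
  Submodule.span_mono fun a ⟨α, hα, ha⟩ => ⟨α, le_of_eq hα, ha⟩

lemma deg_set_eq (k : ℕ) :
    {a : A | ∃ α : Fin n → ℕ, (∑ i, α i) = k ∧ a = skewPBWMonomial x α}
      = skewPBWMonomial x '' {α : Fin n → ℕ | (∑ i, α i) = k} := by
  ext a
  constructor
  · rintro ⟨α, hα, rfl⟩; exact ⟨α, hα, rfl⟩
  · rintro ⟨α, hα, rfl⟩; exact ⟨α, hα, rfl⟩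

end SkewAux

open SkewAux in
/-- a skew PBW extension `A` of `R` is a finitely semi-graded ring with
semi-graduation `A_k` = span of the monomials of degree `k`: `A = ⊕_k A_k`,
`A_p A_q ⊆ A_0 ⊕ ⋯ ⊕ A_{p+q}`, `1 ∈ A_0 = R`, each `A_k` is a free left `A_0`-module of
finite rank (with basis the degree-`k` monomials), and `A` is generated as a ring by
`A_0` together with `x_1, …, x_n ∈ A_1`. -/
theorem skewPBW_is_FSG {A : Type*} [Ring A] (S : Subring A) {n : ℕ}
    (x : Fin n → A) (h : IsSkewPBWExt S x) :
    DirectSum.IsInternal (skewPBWDeg S x) ∧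
    (∀ p q : ℕ, ∀ a b : A, a ∈ skewPBWDeg S x p → b ∈ skewPBWDeg S x q →
      a * b ∈ ⨆ k ∈ Set.Iic (p + q), skewPBWDeg S x k) ∧
    ((1 : A) ∈ skewPBWDeg S x 0 ∧ (skewPBWDeg S x 0 : Set A) = (S : Set A)) ∧
    (∀ k : ℕ, Finite {α : Fin n → ℕ // (∑ i, α i) = k} ∧
      ∃ b : Module.Basis {α : Fin n → ℕ // (∑ i, α i) = k} S (skewPBWDeg S x k),
        ∀ α, (b α : A) = skewPBWMonomial x α.val) ∧
    (∀ i : Fin n, x i ∈ skewPBWDeg S x 1) ∧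
    Subring.closure ((S : Set A) ∪ Set.range x) = ⊤ := by
  classical
  refine ⟨?_, ?_, ⟨?_, ?_⟩, ?_, ?_, ?_⟩
  · -- direct sum
    have hsup : iSup (skewPBWDeg S x) = ⊤ := by
      rw [eq_top_iff, ← h.span_top, Submodule.span_le]
      rintro a ⟨α, rfl⟩
      exact Submodule.mem_iSup_of_mem (∑ i, α i) (Submodule.subset_span ⟨α, rfl, rfl⟩)
    have hind : iSupIndep (skewPBWDeg S x) := by
      intro k
      have h1 : skewPBWDeg S x k
          = Submodule.span S (skewPBWMonomial x '' {α | (∑ i, α i) = k}) := by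
        rw [skewPBWDeg, deg_set_eq]
      have h2 : (⨆ j, ⨆ (_ : j ≠ k), skewPBWDeg S x j)
          ≤ Submodule.span S (skewPBWMonomial x '' {α | (∑ i, α i) ≠ k}) := by
        refine iSup₂_le fun j hj => ?_
        rw [skewPBWDeg, deg_set_eq]
        refine Submodule.span_mono (Set.image_mono ?_)
        intro α hα
        simp only [Set.mem_setOf_eq] at hα ⊢
        rw [hα]; exact hj
      have hdisj := h.linearIndependent.disjoint_span_image
        (s := {α : Fin n → ℕ | (∑ i, α i) = k}) (t := {α | (∑ i, α i) ≠ k})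
        (Set.disjoint_left.mpr fun α h1 h2 => h2 h1)
      rw [h1]
      exact hdisj.mono_right h2
    exact DirectSum.isInternal_submodule_of_iSupIndep_of_iSup_eq_top hind hsup
  · -- products
    intro p q a b ha hb
    have hb' : b ∈ skewF S x q := deg_le_skewF q hb
    have hab : ∀ c, c ∈ skewF S x p → c * b ∈ skewF S x (p + q) := by
      intro c hc
      induction hc using Submodule.span_induction with
      | mem u hu => obtain ⟨α, hα, rfl⟩ := hu; exact mono_mul_mem h p α hα q b hb'
      | zero => rw [zero_mul]; exact zero_mem _
      | add u v _ _ hu hv => rw [add_mul]; exact add_mem hu hv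
      | smul s u _ hu =>
          rw [smul_coe, mul_assoc, ← smul_coe]
          exact Submodule.smul_mem _ s hu
    have hle : skewF S x (p+q) ≤ ⨆ k ∈ Set.Iic (p + q), skewPBWDeg S x k := by
      rw [skewF, Submodule.span_le]
      rintro c ⟨α, hα, rfl⟩
      exact Submodule.mem_iSup_of_mem (∑ i, α i)
        (Submodule.mem_iSup_of_mem hα (Submodule.subset_span ⟨α, rfl, rfl⟩))
    exact hle (hab a (deg_le_skewF p ha))
  · -- 1 ∈ A₀
    exact Submodule.subset_span ⟨fun _ => 0, by simp, (mono_zero x).symm⟩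
  · -- A₀ = S
    have hset : {a : A | ∃ α : Fin n → ℕ, (∑ i, α i) = 0 ∧ a = skewPBWMonomial x α}
        = {1} := by
      ext a
      simp only [Set.mem_setOf_eq, Set.mem_singleton_iff]
      constructor
      · rintro ⟨α, hα, rfl⟩
        have hz : α = fun _ => 0 :=
          funext fun i => Finset.sum_eq_zero_iff.mp hα i (Finset.mem_univ i)
        rw [hz, mono_zero]
      · rintro rfl; exact ⟨fun _ => 0, by simp, (mono_zero x).symm⟩
    rw [skewPBWDeg, hset]
    ext a
    simp only [SetLike.mem_coe, Submodule.mem_span_singleton]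
    constructor
    · rintro ⟨s, rfl⟩
      rw [smul_coe, mul_one]; exact s.2
    · intro haS
      exact ⟨⟨a, haS⟩, by rw [smul_coe, mul_one]⟩
  · -- bases
    intro k
    constructor
    · have hbound : ∀ (α : {α : Fin n → ℕ // (∑ i, α i) = k}) (i : Fin n), α.1 i < k + 1 := by
        intro α i
        have h1 := Finset.single_le_sum (f := α.1) (fun j _ => Nat.zero_le _) (Finset.mem_univ i)
        rw [α.2] at h1
        omega
      exact Finite.of_injective (fun α => fun i => (⟨α.1 i, hbound α i⟩ : Fin (k+1)))
        (fun a b hab => Subtype.ext (funext fun i => congrArg Fin.val (congrFun hab i)))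
    · have hli : LinearIndependent S
          (fun α : {α : Fin n → ℕ // (∑ i, α i) = k} => skewPBWMonomial x α.1) :=
        h.linearIndependent.comp _ Subtype.val_injective
      have hspan : skewPBWDeg S x k
          = Submodule.span S (Set.range
              fun α : {α : Fin n → ℕ // (∑ i, α i) = k} => skewPBWMonomial x α.1) := by
        rw [skewPBWDeg, deg_set_eq, Set.image_eq_range]
        rfl
      refine ⟨(Module.Basis.span hli).map (LinearEquiv.ofEq _ _ hspan.symm), fun α => ?_⟩
      rw [Module.Basis.map_apply, LinearEquiv.coe_ofEq_apply, Module.Basis.span_apply]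
  · -- x i ∈ A₁
    intro i
    have hm := xi_mul_mono x (fun _ => 0) i (fun _ _ => rfl)
    rw [mono_zero, mul_one] at hm
    refine Submodule.subset_span ⟨_, ?_, hm⟩
    rw [sum_update_succ]
    simp
  · -- generation
    rw [eq_top_iff]
    intro a hmem
    clear hmem
    have haa : a ∈ Submodule.span S (Set.range (skewPBWMonomial x)) := by
      rw [h.span_top]; trivial
    induction haa using Submodule.span_induction with
    | mem u hu =>
        obtain ⟨α, rfl⟩ := hu
        show (List.ofFn fun i => x i ^ α i).prod ∈ _
        refine Subring.list_prod_mem _ ?_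
        intro y hy
        rw [List.mem_ofFn] at hy
        obtain ⟨i, rfl⟩ := hy
        refine pow_mem ?_ (α i)
        exact Subring.subset_closure (Or.inr ⟨i, rfl⟩)
    | zero => exact zero_mem _
    | add u v _ _ hu hv => exact add_mem hu hv
    | smul s u _ hu =>
        rw [smul_coe]
        exact mul_mem (Subring.subset_closure (Or.inl s.2)) hu
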